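/- For every integer s ≥ 0, one has L_s(e^φ) = h_s·e^φ + D_s(e^φ). That is, the coherent state e^φ satisfies L_s·coh = 𝓛_s·coh, where 𝓛_s = h_s + D_s is a first-order differential operator in the internal parameters λ_1,…,λ_r. -/

import Mathlib

/-!
STATEMENT 12.
Fix r ≥ 1 and ρ ∈ ℂ.  A := ℂ[x_1,x_2,…] (= `MvPolynomial ℕ ℂ`, variable `i`
is x_{i+1}), B := A[[λ_1,…,λ_r]] (= `MvPowerSeries (Fin r) A`).  For p ≥ 1,
a_{−p} is multiplication by x_p and a_p := p·∂/∂x_p (a_0 := 0).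
φ := ∑_{j=1}^r λ_j x_j/j and e^φ := ∑ φ^m/m! (computed by `expB`, exact on
series of positive λ-order).  For s ≥ 0,
  L_s := (1/2)·∑_{k=0}^{s} a_k·a_{s−k} + ∑_{p≥1} a_{−p}·a_{s+p} − ρ(s+1)·a_s
(locally finite sum over p, realized by `finsum`).  With λ_0 := 0, λ_ℓ := 0
for ℓ > r, h_s := (1/2)∑_{j=0}^{s} λ_j λ_{s−j} − ρ(s+1)λ_s and
D_s := ∑_{j=1}^{r−s} j·λ_{j+s}·∂/∂λ_j, the claim: for every s ≥ 0,
  L_s(e^φ) = h_s·e^φ + D_s(e^φ).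
-/

noncomputable section

abbrev A : Type := MvPolynomial ℕ ℂ
abbrev B (r : ℕ) : Type := MvPowerSeries (Fin r) A

/-- `a_p := p ∂/∂x_p` on A (gives 0 at p = 0). -/
def aA (p : ℕ) (P : A) : A := ((p : ℂ)) • MvPolynomial.pderiv (p - 1) P

/-- `L_s = (1/2)∑_{k=0}^{s} a_k a_{s−k} + ∑_{p≥1} a_{−p} a_{s+p} − ρ(s+1) a_s`. -/
def LA (ρ : ℂ) (s : ℕ) (P : A) : A :=
  (1 / 2 : ℂ) • (∑ k ∈ Finset.range (s + 1), aA k (aA (s - k) P))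
    + (∑ᶠ p : ℕ, if 1 ≤ p then MvPolynomial.X (p - 1) * aA (s + p) P else 0)
    - (ρ * ((s : ℂ) + 1)) • aA s P

/-- Coefficientwise extension of `L_s` to B. -/
def LB (r : ℕ) (ρ : ℂ) (s : ℕ) (f : B r) : B r :=
  fun d => LA ρ s (MvPowerSeries.coeff (R := A) d f)

/-- `λ_j` as an element of B (`λ_0 = 0`, `λ_j = 0` for `j > r`). -/
def lamB (r : ℕ) (j : ℕ) : B r :=
  if h : 1 ≤ j ∧ j ≤ r then MvPowerSeries.X (⟨j - 1, by omega⟩ : Fin r) else 0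

/-- `h_s := (1/2)∑_{j=0}^{s} λ_j λ_{s−j} − ρ(s+1)λ_s`. -/
def hB (r : ℕ) (ρ : ℂ) (s : ℕ) : B r :=
  (1 / 2 : ℂ) • ∑ j ∈ Finset.range (s + 1), lamB r j * lamB r (s - j)
    - (ρ * ((s : ℂ) + 1)) • lamB r s

/-- `∂/∂λ_{n+1}` acting coefficientwise on B. -/
def dLam (r : ℕ) (n : Fin r) (f : B r) : B r :=
  fun d => ((d n + 1 : ℕ) : ℂ) • MvPowerSeries.coeff (R := A) (d + Finsupp.single n 1) f

/-- `D_s := ∑_{j=1}^{r−s} j λ_{j+s} ∂/∂λ_j` on B. -/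
def DB (r : ℕ) (s : ℕ) (f : B r) : B r :=
  ∑ j : Fin r,
    if h : (j : ℕ) + 1 + s ≤ r then
      (((j : ℕ) + 1 : ℕ) : ℂ) •
        (MvPowerSeries.X (⟨(j : ℕ) + s, by omega⟩ : Fin r) * dLam r j f)
    else 0

/-- `φ := ∑_{j=1}^r λ_j x_j / j`. -/
def phi (r : ℕ) : B r :=
  ∑ j : Fin r,
    MvPowerSeries.C (σ := Fin r) (R := A)
        (MvPolynomial.C (1 / (((j : ℕ) : ℂ) + 1)) * MvPolynomial.X (j : ℕ))
      * MvPowerSeries.X j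

/-- The exponential `∑_{m≥0} f^m/m!` of a series of positive λ-order. -/
def expB (r : ℕ) (f : B r) : B r :=
  fun d => ∑ m ∈ Finset.range (d.sum (fun _ k => k) + 1),
    ((m.factorial : ℂ))⁻¹ • MvPowerSeries.coeff (R := A) d (f ^ m)

namespace S12
open MvPolynomial MvPowerSeries Finsupp
variable {r : ℕ}

def emb (d : Fin r →₀ ℕ) : ℕ →₀ ℕ := Finsupp.embDomain Fin.valEmbedding d

def K (d : Fin r →₀ ℕ) : ℂ :=
  ∏ j : Fin r, ((((j : ℕ) : ℂ) + 1) ^ (d j) * ((d j).factorial : ℂ))⁻¹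

def Efn (d : Fin r →₀ ℕ) : A := MvPolynomial.monomial (emb d) (K d)

def Eser (r : ℕ) : B r := fun d => Efn d

lemma emb_apply_val (d : Fin r →₀ ℕ) (j : Fin r) : emb d ((j : ℕ)) = d j :=
  Finsupp.embDomain_apply_self _ _ _

lemma emb_apply_ge (d : Fin r →₀ ℕ) {i : ℕ} (h : r ≤ i) : emb d i = 0 := by
  refine Finsupp.embDomain_notin_range _ _ _ ?_
  rintro ⟨j, rfl⟩
  exact absurd h (by simpa using j.isLt.not_le)

lemma emb_add (d e : Fin r →₀ ℕ) : emb (d + e) = emb d + emb e := by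
  ext i
  by_cases h : i < r
  · have : i = ((⟨i, h⟩ : Fin r) : ℕ) := rfl
    rw [this, Finsupp.add_apply, emb_apply_val, emb_apply_val, emb_apply_val, Finsupp.add_apply]
  · rw [Finsupp.add_apply, emb_apply_ge _ (le_of_not_gt h), emb_apply_ge _ (le_of_not_gt h),
      emb_apply_ge _ (le_of_not_gt h)]

lemma emb_single (j : Fin r) (n : ℕ) : emb (Finsupp.single j n) = Finsupp.single (j : ℕ) n := by
  unfold emb; rw [Finsupp.embDomain_single]; rfl

lemma keyK (e : Fin r →₀ ℕ) (j : Fin r) :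
    ((((j : ℕ) : ℂ) + 1) * ((e j : ℂ) + 1)) * K (e + Finsupp.single j 1) = K e := by
  have hjc : (((j : ℕ) : ℂ) + 1) ≠ 0 := Nat.cast_add_one_ne_zero (j : ℕ)
  unfold K
  rw [← Finset.prod_erase_mul Finset.univ _ (Finset.mem_univ j),
      ← Finset.prod_erase_mul Finset.univ _ (Finset.mem_univ j)]
  have hprod : ∀ k ∈ Finset.univ.erase j,
      ((((k : ℕ) : ℂ) + 1) ^ (((e + Finsupp.single j 1 : Fin r →₀ ℕ)) k) * ((((e + Finsupp.single j 1 : Fin r →₀ ℕ)) k).factorial : ℂ))⁻¹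
        = ((((k : ℕ) : ℂ) + 1) ^ (e k) * ((e k).factorial : ℂ))⁻¹ := by
    intro k hk
    have : ((e + Finsupp.single j 1 : Fin r →₀ ℕ)) k = e k := by
      rw [Finsupp.add_apply, Finsupp.single_eq_of_ne' (Finset.ne_of_mem_erase hk).symm, add_zero]
    rw [this]
  rw [Finset.prod_congr rfl hprod]
  have hj : ((e + Finsupp.single j 1 : Fin r →₀ ℕ)) j = e j + 1 := by
    rw [Finsupp.add_apply, Finsupp.single_eq_same]
  rw [hj]
  have hn1 : ((e j : ℂ) + 1) ≠ 0 := Nat.cast_add_one_ne_zero (e j)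
  have key : ((((j : ℕ) : ℂ) + 1) * ((e j : ℂ) + 1)) *
      (((((j : ℕ) : ℂ) + 1)) ^ (e j + 1) * (((e j + 1).factorial : ℂ)))⁻¹
      = (((((j : ℕ) : ℂ) + 1)) ^ (e j) * (((e j).factorial : ℂ)))⁻¹ := by
    rw [pow_succ, Nat.factorial_succ, Nat.cast_mul, Nat.cast_add, Nat.cast_one]
    rw [show ((((j : ℕ) : ℂ) + 1) ^ (e j) * ((((j : ℕ) : ℂ) + 1))) *
        ((((e j : ℕ) : ℂ) + 1) * (((e j).factorial : ℂ)))
        = ((((j : ℕ) : ℂ) + 1) * ((e j : ℂ) + 1)) *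
          (((((j : ℕ) : ℂ) + 1)) ^ (e j) * (((e j).factorial : ℂ))) from by ring]
    rw [mul_inv, ← mul_assoc, mul_inv_cancel₀ (mul_ne_zero hjc hn1), one_mul]
  rw [mul_left_comm, key]

lemma keyEmb (e : Fin r →₀ ℕ) (j : Fin r) :
    emb (e + Finsupp.single j 1) = emb e + Finsupp.single ((j : ℕ)) 1 := by
  rw [emb_add, emb_single]

lemma aA_monomial (q : ℕ) (u : ℕ →₀ ℕ) (c : ℂ) :
    aA q (MvPolynomial.monomial u c)
      = MvPolynomial.monomial (u - Finsupp.single (q - 1) 1) ((q : ℂ) * (c * (u (q - 1) : ℂ))) := by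
  unfold aA
  rw [MvPolynomial.pderiv_monomial, MvPolynomial.smul_monomial, smul_eq_mul]

lemma aA_Efn_add (e : Fin r →₀ ℕ) (j : Fin r) :
    aA ((j : ℕ) + 1) (Efn (e + Finsupp.single j 1)) = Efn e := by
  unfold Efn
  rw [aA_monomial, keyEmb]
  have h1 : (j : ℕ) + 1 - 1 = (j : ℕ) := rfl
  rw [h1]
  have h2 : emb e + Finsupp.single ((j : ℕ)) 1 - Finsupp.single ((j : ℕ)) 1 = emb e := by
    simp
  have h3 : ((emb e + Finsupp.single ((j : ℕ)) 1 : ℕ →₀ ℕ)) ((j : ℕ)) = e j + 1 := by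
    rw [Finsupp.add_apply, emb_apply_val, Finsupp.single_eq_same]
  rw [h2, h3]
  congr 1
  rw [← keyK e j]
  push_cast
  ring

lemma aA_Efn_zero (d : Fin r →₀ ℕ) (j : Fin r) (h : d j = 0) :
    aA ((j : ℕ) + 1) (Efn d) = 0 := by
  unfold Efn
  rw [aA_monomial]
  have h1 : (j : ℕ) + 1 - 1 = (j : ℕ) := rfl
  rw [h1, emb_apply_val, h]
  simp

lemma aA_Efn_gt {q : ℕ} (h : r < q) (d : Fin r →₀ ℕ) : aA q (Efn d) = 0 := by
  unfold Efn
  rw [aA_monomial, emb_apply_ge d (by omega : r ≤ q - 1)]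
  simp

lemma aA_zero (a : ℕ) : aA a (0 : A) = 0 := by unfold aA; simp

lemma coeff_X_mul (n : Fin r) (f : B r) (d : Fin r →₀ ℕ) :
    MvPowerSeries.coeff (R := A) d (MvPowerSeries.X n * f)
      = if Finsupp.single n 1 ≤ d then MvPowerSeries.coeff (R := A) (d - Finsupp.single n 1) f else 0 := by
  classical
  rw [MvPowerSeries.X_def, MvPowerSeries.coeff_monomial_mul]
  split_ifs with h
  · rw [one_mul]
  · rfl


def cA (j : Fin r) : A := MvPolynomial.C (1 / (((j : ℕ) : ℂ) + 1)) * MvPolynomial.X ((j : ℕ))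

lemma aA_coeff (q : ℕ) (d : Fin r →₀ ℕ) :
    aA q (Efn d) = MvPowerSeries.coeff (R := A) d (lamB r q * Eser r) := by
  by_cases hq : 1 ≤ q ∧ q ≤ r
  · have hj : q - 1 < r := by omega
    set j : Fin r := ⟨q - 1, hj⟩ with hjdef
    have hqj : q = (j : ℕ) + 1 := by simp [hjdef]; omega
    rw [lamB, dif_pos hq, coeff_X_mul]
    by_cases hd : Finsupp.single j 1 ≤ d
    · rw [if_pos hd]
      have hde : d = (d - Finsupp.single j 1) + Finsupp.single j 1 := (tsub_add_cancel_of_le hd).symm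
      conv_lhs => rw [hqj, hde, aA_Efn_add]
      rfl
    · rw [if_neg hd, hqj]
      have h0 : d j = 0 := by
        by_contra h
        exact hd (Finsupp.single_le_iff.mpr (by omega))
      exact aA_Efn_zero d j h0
  · rw [lamB, dif_neg hq, zero_mul, map_zero]
    rcases Nat.lt_or_ge r q with h | h
    · exact aA_Efn_gt h d
    · have : q = 0 := by omega
      subst this
      simp [aA]

lemma aA_coeff_lam (a q : ℕ) (d : Fin r →₀ ℕ) :
    aA a (MvPowerSeries.coeff (R := A) d (lamB r q * Eser r))
      = MvPowerSeries.coeff (R := A) d (lamB r q * (lamB r a * Eser r)) := by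
  by_cases hq : 1 ≤ q ∧ q ≤ r
  · rw [lamB, dif_pos hq, coeff_X_mul, coeff_X_mul]
    split_ifs with h
    · rw [show MvPowerSeries.coeff (R := A) (d - Finsupp.single (⟨q - 1, by omega⟩ : Fin r) 1) (Eser r)
          = Efn (d - Finsupp.single (⟨q - 1, by omega⟩ : Fin r) 1) from rfl, aA_coeff]
    · exact aA_zero a
  · rw [lamB, dif_neg hq, zero_mul, zero_mul, map_zero]
    exact aA_zero a

lemma claim1 (k m : ℕ) (d : Fin r →₀ ℕ) :
    aA k (aA m (Efn d)) = MvPowerSeries.coeff (R := A) d (lamB r k * (lamB r m * Eser r)) := by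
  rw [aA_coeff m d, aA_coeff_lam k m d, mul_left_comm]

lemma coeff_phi (u : Fin r →₀ ℕ) :
    MvPowerSeries.coeff (R := A) u (phi r)
      = ∑ j : Fin r, if u = Finsupp.single j 1 then cA j else 0 := by
  unfold phi
  rw [map_sum]
  refine Finset.sum_congr rfl fun j _ => ?_
  rw [MvPowerSeries.coeff_C_mul, MvPowerSeries.coeff_X]
  by_cases h : u = Finsupp.single j 1 <;> simp [h, cA]

lemma cA_mul_monomial (j : Fin r) (a : ℕ →₀ ℕ) (b : ℂ) :
    cA j * MvPolynomial.monomial a b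
      = MvPolynomial.monomial (a + Finsupp.single ((j : ℕ)) 1) ((((j : ℕ) : ℂ) + 1)⁻¹ * b) := by
  unfold cA
  rw [MvPolynomial.C_mul_X_eq_monomial, MvPolynomial.monomial_mul, add_comm, one_div]

lemma sum_add_single (e : Fin r →₀ ℕ) (j : Fin r) :
    (e + Finsupp.single j 1).sum (fun _ k => k) = e.sum (fun _ k => k) + 1 := by
  rw [Finsupp.sum_add_index' (fun _ => rfl) (fun _ b c => rfl),
    Finsupp.sum_single_index rfl]

lemma sum_cast (d : Fin r →₀ ℕ) :
    ((d.sum (fun _ k => k) : ℕ) : ℂ) = ∑ j : Fin r, (d j : ℂ) := by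
  rw [Finsupp.sum_fintype _ _ (fun _ => rfl)]
  push_cast
  rfl

lemma coeff_phi_pow (m : ℕ) (d : Fin r →₀ ℕ) :
    MvPowerSeries.coeff (R := A) d (phi r ^ m)
      = if d.sum (fun _ k => k) = m then
          MvPolynomial.monomial (emb d) ((m.factorial : ℂ) * K d) else 0 := by
  classical
  induction m generalizing d with
  | zero =>
    rw [pow_zero]
    by_cases hd : d = 0
    · subst hd
      rw [MvPowerSeries.coeff_one, if_pos rfl, if_pos Finsupp.sum_zero_index]
      have h1 : emb (0 : Fin r →₀ ℕ) = 0 := by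
        ext i; by_cases h : i < r
        · have : i = ((⟨i, h⟩ : Fin r) : ℕ) := rfl
          rw [this, emb_apply_val]; rfl
        · rw [emb_apply_ge _ (le_of_not_gt h)]; rfl
      have h2 : K (0 : Fin r →₀ ℕ) = 1 := by
        unfold K; simp
      rw [h1, h2]
      simp
    · have hsum : d.sum (fun _ k => k) ≠ 0 := by
        rw [Finsupp.sum_fintype _ _ (fun _ => rfl)]
        intro h0
        apply hd
        ext j
        exact (Finset.sum_eq_zero_iff.mp h0) j (Finset.mem_univ j)
      rw [MvPowerSeries.coeff_one, if_neg hd, if_neg hsum]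
  | succ m ih =>
    rw [pow_succ', MvPowerSeries.coeff_mul]
    have hterm : ∀ p ∈ Finset.HasAntidiagonal.antidiagonal d,
        MvPowerSeries.coeff (R := A) p.1 (phi r) * MvPowerSeries.coeff (R := A) p.2 (phi r ^ m)
          = ∑ j : Fin r, (if p.1 = Finsupp.single j 1
              then cA j * MvPowerSeries.coeff (R := A) p.2 (phi r ^ m) else 0) := by
      intro p _
      rw [coeff_phi, Finset.sum_mul]
      refine Finset.sum_congr rfl fun j _ => ?_
      rw [ite_mul, zero_mul]
    rw [Finset.sum_congr rfl hterm, Finset.sum_comm]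
    have hinner : ∀ j : Fin r,
        (∑ p ∈ Finset.HasAntidiagonal.antidiagonal d, if p.1 = Finsupp.single j 1
            then cA j * MvPowerSeries.coeff (R := A) p.2 (phi r ^ m) else 0)
          = if 1 ≤ d j then cA j * MvPowerSeries.coeff (R := A) (d - Finsupp.single j 1) (phi r ^ m)
            else 0 := by
      intro j
      by_cases hdj : 1 ≤ d j
      · rw [if_pos hdj]
        have hb : (Finsupp.single j 1, d - Finsupp.single j 1) ∈ Finset.HasAntidiagonal.antidiagonal d := by
          rw [Finset.HasAntidiagonal.mem_antidiagonal]
          exact add_tsub_cancel_of_le (Finsupp.single_le_iff.mpr hdj)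
        rw [Finset.sum_eq_single (Finsupp.single j 1, d - Finsupp.single j 1)]
        · rw [if_pos rfl]
        · intro p hp hne
          rw [if_neg]
          intro h1
          apply hne
          have h2 := Finset.HasAntidiagonal.mem_antidiagonal.mp hp
          have h3 : p.2 = d - Finsupp.single j 1 := by
            rw [← h2, h1]
            exact (add_tsub_cancel_left _ _).symm
          exact Prod.ext h1 h3
        · intro hb'; exact absurd hb hb'
      · rw [if_neg hdj]
        refine Finset.sum_eq_zero fun p hp => ?_
        rw [if_neg]
        intro h1
        have h2 := Finset.HasAntidiagonal.mem_antidiagonal.mp hp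
        apply hdj
        have h3 : d j = p.1 j + p.2 j := by rw [← h2]; rfl
        rw [h3, h1, Finsupp.single_eq_same]
        omega
    rw [Finset.sum_congr rfl (fun j _ => hinner j)]
    by_cases hds : d.sum (fun _ k => k) = m + 1
    · rw [if_pos hds]
      have hterm2 : ∀ j : Fin r,
          (if 1 ≤ d j then cA j * MvPowerSeries.coeff (R := A) (d - Finsupp.single j 1) (phi r ^ m)
            else 0)
            = MvPolynomial.monomial (emb d) (((m.factorial : ℂ) * K d) * (d j : ℂ)) := by
        intro j
        by_cases hdj : 1 ≤ d j
        · rw [if_pos hdj, ih]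
          set e := d - Finsupp.single j 1 with he
          have hde : d = e + Finsupp.single j 1 :=
            (tsub_add_cancel_of_le (Finsupp.single_le_iff.mpr hdj)).symm
          have hesum : e.sum (fun _ k => k) = m := by
            have h4 := sum_add_single e j
            rw [← hde] at h4
            omega
          rw [if_pos hesum, cA_mul_monomial]
          have h1 : emb e + Finsupp.single ((j : ℕ)) 1 = emb d := by
            rw [← keyEmb]; conv_rhs => rw [hde]
          rw [h1]
          congr 1
          have hK : K e = ((((j : ℕ) : ℂ) + 1) * ((e j : ℂ) + 1)) * K d := by
            conv_lhs => rw [← keyK e j, ← hde]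
          rw [hK]
          have hdj' : (d j : ℂ) = (e j : ℂ) + 1 := by
            conv_lhs => rw [hde]
            push_cast [Finsupp.add_apply, Finsupp.single_eq_same]
            ring
          rw [hdj']
          have hjne : (((j : ℕ) : ℂ) + 1) ≠ 0 := Nat.cast_add_one_ne_zero _
          field_simp
        · rw [if_neg hdj]
          have h0 : d j = 0 := by omega
          rw [h0]
          simp
      rw [Finset.sum_congr rfl (fun j _ => hterm2 j), ← map_sum, ← Finset.mul_sum, ← sum_cast,
        hds]
      congr 1
      push_cast [Nat.factorial_succ]
      ring
    · rw [if_neg hds]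
      refine Finset.sum_eq_zero fun j _ => ?_
      by_cases hdj : 1 ≤ d j
      · rw [if_pos hdj, ih, if_neg, mul_zero]
        intro hesum
        have hde : d = (d - Finsupp.single j 1) + Finsupp.single j 1 :=
          (tsub_add_cancel_of_le (Finsupp.single_le_iff.mpr hdj)).symm
        apply hds
        have h4 := sum_add_single (d - Finsupp.single j 1) j
        rw [← hde] at h4
        omega
      · rw [if_neg hdj]

lemma exp_eq : expB r (phi r) = Eser r := by
  funext d
  show (∑ m ∈ Finset.range (d.sum (fun _ k => k) + 1),
    ((m.factorial : ℂ))⁻¹ • MvPowerSeries.coeff (R := A) d (phi r ^ m)) = Efn d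
  rw [Finset.sum_eq_single (d.sum (fun _ k => k))]
  · rw [coeff_phi_pow, if_pos rfl, MvPolynomial.smul_monomial, smul_eq_mul,
      inv_mul_cancel_left₀ (Nat.cast_ne_zero.mpr (Nat.factorial_ne_zero _))]
    rfl
  · intro m _ hm
    rw [coeff_phi_pow, if_neg (Ne.symm hm), smul_zero]
  · intro h
    exact absurd (Finset.self_mem_range_succ _) h

lemma coeff_csmul (c : ℂ) (f : B r) (d : Fin r →₀ ℕ) :
    MvPowerSeries.coeff (R := A) d (c • f) = c • MvPowerSeries.coeff (R := A) d f := rfl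

lemma X_mul_Efn (j : Fin r) (e : Fin r →₀ ℕ) :
    (MvPolynomial.X ((j : ℕ)) : A) * Efn e
      = ((((j : ℕ) : ℂ) + 1) * ((e j : ℂ) + 1)) • Efn (e + Finsupp.single j 1) := by
  unfold Efn
  rw [MvPolynomial.smul_monomial, smul_eq_mul, keyK, keyEmb]
  rw [show (MvPolynomial.X ((j : ℕ)) : A)
      = MvPolynomial.monomial (Finsupp.single ((j : ℕ)) 1) 1 from rfl,
    MvPolynomial.monomial_mul, one_mul, add_comm]

lemma claim2 (s : ℕ) (d : Fin r →₀ ℕ) (j : Fin r) :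
    MvPolynomial.X ((j : ℕ)) * aA (s + ((j : ℕ) + 1)) (Efn d)
      = MvPowerSeries.coeff (R := A) d
          (if h : (j : ℕ) + 1 + s ≤ r then
            (((j : ℕ) + 1 : ℕ) : ℂ) •
              (MvPowerSeries.X (⟨(j : ℕ) + s, by omega⟩ : Fin r) * dLam r j (Eser r))
          else 0) := by
  by_cases h : (j : ℕ) + 1 + s ≤ r
  · rw [dif_pos h]
    have hi : (j : ℕ) + s < r := by omega
    set i : Fin r := ⟨(j : ℕ) + s, hi⟩ with hidef
    have hq : s + ((j : ℕ) + 1) = (i : ℕ) + 1 := by simp [hidef]; omega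
    rw [hq, coeff_csmul, coeff_X_mul]
    by_cases hd : Finsupp.single i 1 ≤ d
    · rw [if_pos hd]
      set e := d - Finsupp.single i 1 with he
      have hde : d = e + Finsupp.single i 1 := (tsub_add_cancel_of_le hd).symm
      conv_lhs => rw [hde, aA_Efn_add]
      show MvPolynomial.X ((j : ℕ)) * Efn e
        = (((j : ℕ) + 1 : ℕ) : ℂ) • (((e j + 1 : ℕ) : ℂ) •
            MvPowerSeries.coeff (R := A) (e + Finsupp.single j 1) (Eser r))
      rw [show MvPowerSeries.coeff (R := A) (e + Finsupp.single j 1) (Eser r)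
          = Efn (e + Finsupp.single j 1) from rfl]
      rw [X_mul_Efn, smul_smul]
      congr 1
      push_cast
      ring
    · rw [if_neg hd, smul_zero]
      have h0 : d i = 0 := by
        by_contra h1
        exact hd (Finsupp.single_le_iff.mpr (by omega))
      rw [aA_Efn_zero d i h0, mul_zero]
  · rw [dif_neg h, map_zero]
    rw [show s + ((j : ℕ) + 1) = (j : ℕ) + 1 + s by omega,
      aA_Efn_gt (by omega) d, mul_zero]

lemma finsum_eq (s : ℕ) (d : Fin r →₀ ℕ) :
    (∑ᶠ p : ℕ, if 1 ≤ p then MvPolynomial.X (p - 1) * aA (s + p) (Efn d) else 0)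
      = MvPowerSeries.coeff (R := A) d (DB r s (Eser r)) := by
  classical
  have hsupp : (Function.support fun p : ℕ =>
      if 1 ≤ p then MvPolynomial.X (p - 1) * aA (s + p) (Efn d) else 0)
        ⊆ ↑(Finset.range (r + 1)) := by
    intro p hp
    simp only [Function.mem_support] at hp
    by_contra hpr
    simp only [Finset.coe_range, Set.mem_Iio, not_lt] at hpr
    apply hp
    have h1 : 1 ≤ p := by omega
    rw [if_pos h1, aA_Efn_gt (by omega) d, mul_zero]
  rw [finsum_eq_finset_sum_of_support_subset _ hsupp, Finset.sum_range_succ']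
  rw [if_neg (by omega : ¬ (1 : ℕ) ≤ 0), add_zero]
  rw [← Fin.sum_univ_eq_sum_range
    (fun i => if 1 ≤ i + 1 then MvPolynomial.X (i + 1 - 1) * aA (s + (i + 1)) (Efn d) else 0) r]
  rw [DB, map_sum]
  refine Finset.sum_congr rfl fun j _ => ?_
  rw [if_pos (by omega : 1 ≤ (j : ℕ) + 1), Nat.add_sub_cancel]
  exact claim2 s d j

end S12


theorem statement12 (r : ℕ) (hr : 1 ≤ r) (ρ : ℂ) (s : ℕ) :
    LB r ρ s (expB r (phi r))
      = hB r ρ s * expB r (phi r) + DB r s (expB r (phi r)) := by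
  classical
  rw [S12.exp_eq]
  apply MvPowerSeries.ext
  intro d
  have hl : MvPowerSeries.coeff (R := A) d (LB r ρ s (S12.Eser r)) = LA ρ s (S12.Efn d) := rfl
  rw [map_add, hl]
  unfold LA
  have hhb : MvPowerSeries.coeff (R := A) d (hB r ρ s * S12.Eser r)
      = (1 / 2 : ℂ) • (∑ k ∈ Finset.range (s + 1),
          MvPowerSeries.coeff (R := A) d (lamB r k * (lamB r (s - k) * S12.Eser r)))
        - (ρ * ((s : ℂ) + 1)) • MvPowerSeries.coeff (R := A) d (lamB r s * S12.Eser r) := by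
    rw [hB, sub_mul, smul_mul_assoc, smul_mul_assoc, Finset.sum_mul]
    simp only [mul_assoc]
    rw [map_sub, S12.coeff_csmul, S12.coeff_csmul, map_sum]
  rw [hhb, S12.finsum_eq s d,
    Finset.sum_congr rfl (fun k _ => S12.claim1 k (s - k) d),
    S12.aA_coeff s d]
  abel

end
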